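/- Let c, d, t be natural numbers with c ≥ 1 and d ≥ 1 such that d does not divide c. If d^{j+1} divides c^j·t for every j ∈ ℕ, then t = 0. -/

import Mathlib

/-- Let c, d, t be natural numbers with c ≥ 1 and d ≥ 1 such that d does not divide c.
If d^(j+1) divides c^j·t for every j ∈ ℕ, then t = 0. -/
theorem statement12 (c d t : ℕ) (hc : 1 ≤ c) (hd : 1 ≤ d) (hnd : ¬ d ∣ c)
    (h : ∀ j : ℕ, d ^ (j + 1) ∣ c ^ j * t) : t = 0 := by
  by_contra ht
  have htpos : 0 < t := Nat.pos_of_ne_zero ht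
  set g := Nat.gcd c d with hg
  have hgpos : 0 < g := Nat.gcd_pos_of_pos_left d (by omega)
  set c₁ := c / g with hc1
  set d₁ := d / g with hd1
  have hcg : c = g * c₁ := (Nat.mul_div_cancel' (Nat.gcd_dvd_left c d)).symm
  have hdg : d = g * d₁ := (Nat.mul_div_cancel' (Nat.gcd_dvd_right c d)).symm
  have hcop : Nat.Coprime c₁ d₁ :=
    Nat.coprime_div_gcd_div_gcd hgpos
  have hd₁ : 2 ≤ d₁ := by
    rcases Nat.lt_or_ge d₁ 2 with h2 | h2
    · exfalso
      have hd1ne : d₁ ≠ 0 := by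
        intro h0
        rw [h0, Nat.mul_zero] at hdg; omega
      have hd1' : d₁ = 1 :=
        le_antisymm (Nat.lt_succ_iff.mp h2) (Nat.one_le_iff_ne_zero.mpr hd1ne)
      apply hnd
      rw [hdg, hcg, hd1', Nat.mul_one]
      exact Dvd.intro c₁ rfl
    · exact h2
  -- key: d₁^(j+1) ∣ t
  have key : ∀ j : ℕ, d₁ ^ (j + 1) ∣ t := by
    intro j
    have h1 : g ^ (j + 1) * d₁ ^ (j + 1) ∣ g ^ j * (c₁ ^ j * t) := by
      have := h j
      rw [hcg, hdg, mul_pow, mul_pow] at this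
      calc g ^ (j + 1) * d₁ ^ (j + 1) ∣ g ^ j * c₁ ^ j * t := this
        _ = g ^ j * (c₁ ^ j * t) := by ring
    have h2 : g * d₁ ^ (j + 1) ∣ c₁ ^ j * t := by
      have hgj : (0:ℕ) < g ^ j := pow_pos hgpos j
      rcases h1 with ⟨k, hk⟩
      refine ⟨k, ?_⟩
      have : g ^ j * (c₁ ^ j * t) = g ^ j * (g * d₁ ^ (j + 1) * k) := by
        rw [hk]; ring
      exact Nat.eq_of_mul_eq_mul_left hgj this
    have h3 : d₁ ^ (j + 1) ∣ c₁ ^ j * t := dvd_trans (Dvd.intro_left g rfl) h2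
    exact Nat.Coprime.dvd_of_dvd_mul_left
      (Nat.Coprime.pow (j+1) j (Nat.Coprime.symm hcop)) h3
  have hle := Nat.le_of_dvd htpos (key t)
  have : t < d₁ ^ (t + 1) := by
    calc t < 2 ^ (t + 1) := by
            have := @Nat.lt_two_pow_self t
            calc t < 2 ^ t := this
              _ ≤ 2 ^ (t+1) := Nat.pow_le_pow_right (by omega) (by omega)
      _ ≤ d₁ ^ (t + 1) := Nat.pow_le_pow_left hd₁ _
  omega
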